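/- arXiv:1610.02962 — 2 statements merged into one kernel-verified Lean document; each statement's English description precedes it below -/
import Mathlib

section
/- Let λ₁ ≥ λ₂ ≥ … ≥ λ_m be the eigenvalues, in non-increasing order, of the symmetric positive semidefinite matrix Zᵀ·Z ∈ ℝ^{m×m}. Then the optimal approximation error satisfies: min over A ∈ ℝ^{n×n} with rank(A) ≤ k of ‖Y − A·X‖_F² = (λ_{k+1} + λ_{k+2} + … + λ_m) + ‖Y·(I_m − Π)‖_F² (the error characterisation of Theorem 4.1, with the squared singular values of Z realised as the eigenvalues of ZᵀZ). -/
open Matrix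

/-- The Frobenius norm of a real matrix. -/
noncomputable def frobNorm {p q : ℕ} (A : Matrix (Fin p) (Fin q) ℝ) : ℝ :=
  Real.sqrt (∑ i, ∑ j, (A i j) ^ 2)

open Finset


noncomputable def fsq {p q : ℕ} (A : Matrix (Fin p) (Fin q) ℝ) : ℝ := ∑ i, ∑ j, (A i j) ^ 2

lemma fsq_nonneg {p q : ℕ} (A : Matrix (Fin p) (Fin q) ℝ) : 0 ≤ fsq A :=
  Finset.sum_nonneg fun _ _ => Finset.sum_nonneg fun _ _ => sq_nonneg _

lemma fsq_eq_trace {p q : ℕ} (A : Matrix (Fin p) (Fin q) ℝ) :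
    fsq A = Matrix.trace (Aᵀ * A) := by
  simp only [fsq, Matrix.trace, Matrix.diag, Matrix.mul_apply, Matrix.transpose_apply, sq]
  exact Finset.sum_comm

lemma fsq_add {p q : ℕ} (A B : Matrix (Fin p) (Fin q) ℝ) (h : Matrix.trace (Aᵀ * B) = 0) :
    fsq (A + B) = fsq A + fsq B := by
  have h2 : Matrix.trace (Bᵀ * A) = 0 := by
    have := Matrix.trace_transpose (Aᵀ * B)
    rw [Matrix.transpose_mul, Matrix.transpose_transpose] at this
    rw [this, h]
  simp only [fsq_eq_trace, Matrix.transpose_add, Matrix.add_mul, Matrix.mul_add,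
    Matrix.trace_add, h, h2]
  ring

noncomputable abbrev euc {n : ℕ} (x : Fin n → ℝ) : EuclideanSpace ℝ (Fin n) :=
  (WithLp.equiv 2 _).symm x

lemma inner_euc {n : ℕ} (x y : EuclideanSpace ℝ (Fin n)) :
    (inner ℝ x y : ℝ) = ∑ i, x i * y i := by
  simp [PiLp.inner_apply, RCLike.inner_apply, starRingEnd_apply]
  exact Finset.sum_congr rfl fun _ _ => mul_comm _ _

lemma norm_sq_euc {n : ℕ} (x : EuclideanSpace ℝ (Fin n)) :
    ‖x‖ ^ 2 = ∑ i, x i ^ 2 := by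
  rw [← real_inner_self_eq_norm_sq, inner_euc]; simp [sq]

lemma exists_onb_span {n m k : ℕ} (A : Matrix (Fin n) (Fin n) ℝ)
    (hA : A.rank ≤ k) (X : Matrix (Fin n) (Fin m) ℝ) :
    ∃ (r : ℕ) (v : Fin r → EuclideanSpace ℝ (Fin n)), r ≤ k ∧ Orthonormal ℝ v ∧
      ∀ j : Fin m, euc (fun i => (A * X) i j) ∈ Submodule.span ℝ (Set.range v) := by
  classical
  set e := (WithLp.linearEquiv 2 ℝ (Fin n → ℝ)).symm
  set S : Submodule ℝ (EuclideanSpace ℝ (Fin n)) :=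
    (LinearMap.range A.mulVecLin).map e.toLinearMap with hS
  have hfr : Module.finrank ℝ S = A.rank := by
    rw [hS, LinearEquiv.finrank_map_eq]; rfl
  set b := stdOrthonormalBasis ℝ S
  refine ⟨Module.finrank ℝ S, fun t => (b t : EuclideanSpace ℝ (Fin n)),
    hfr ▸ hA, b.orthonormal.comp_linearIsometry S.subtypeₗᵢ, fun j => ?_⟩
  have hspan : Submodule.span ℝ (Set.range fun t => (b t : EuclideanSpace ℝ (Fin n))) = S := by
    have : (Set.range fun t => (b t : EuclideanSpace ℝ (Fin n))) =
        S.subtype '' (Set.range b) := by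
      ext x; simp [Set.range_comp]
    rw [this, Submodule.span_image, ← b.coe_toBasis, b.toBasis.span_eq, Submodule.map_top,
      Submodule.range_subtype]
  rw [hspan]
  refine ⟨A.mulVec (fun i => X i j), ⟨_, rfl⟩, ?_⟩
  ext i
  simp [Matrix.mul_apply, Matrix.mulVec, dotProduct, e]

lemma card_filter_lt {m k : ℕ} (hkm : k ≤ m) :
    (Finset.univ.filter fun i : Fin m => (i : ℕ) < k).card = k := by
  classical
  have : (Finset.univ.filter fun i : Fin m => (i : ℕ) < k) =
      Finset.map (Fin.castLEEmb hkm) Finset.univ := by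
    ext i
    simp only [mem_filter, mem_map, mem_univ, true_and, Fin.castLEEmb_apply]
    constructor
    · intro h; exact ⟨⟨i, h⟩, by ext; simp⟩
    · rintro ⟨x, rfl⟩; simpa using x.2
  rw [this, Finset.card_map, Finset.card_univ, Fintype.card_fin]

lemma comb {m k : ℕ} (hkm : k ≤ m) (μ c : Fin m → ℝ) (hμ0 : ∀ i, 0 ≤ μ i)
    (hord : ∀ i j : Fin m, i ≤ j → μ j ≤ μ i) (hc0 : ∀ i, 0 ≤ c i) (hc1 : ∀ i, c i ≤ 1)
    (hsum : ∑ i, c i ≤ (k : ℝ)) :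
    ∑ i, μ i * c i ≤ ∑ i ∈ Finset.univ.filter (fun i : Fin m => (i : ℕ) < k), μ i := by
  classical
  set s := Finset.univ.filter (fun i : Fin m => (i : ℕ) < k) with hs
  set t := Finset.univ.filter (fun i : Fin m => ¬ (i : ℕ) < k) with ht
  have hsplit : ∀ f : Fin m → ℝ, ∑ i, f i = ∑ i ∈ s, f i + ∑ i ∈ t, f i := by
    intro f; rw [hs, ht, Finset.sum_filter_add_sum_filter_not]
  rcases eq_or_lt_of_le hkm with h | h
  · have hsu : s = Finset.univ := by
      ext i
      simp only [hs, mem_filter, mem_univ, true_and, iff_true]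
      exact h ▸ i.2
    rw [hsu]
    exact Finset.sum_le_sum fun i _ => by
      calc μ i * c i ≤ μ i * 1 := by nlinarith [hμ0 i, hc1 i]
        _ = μ i := mul_one _
  · set K : Fin m := ⟨k, h⟩ with hK
    have ha0 : 0 ≤ μ K := hμ0 K
    have hcard : (s.card : ℝ) = k := by rw [hs, card_filter_lt hkm]
    have step1 : ∑ i ∈ t, μ i * c i ≤ μ K * ∑ i ∈ t, c i := by
      rw [Finset.mul_sum]
      refine Finset.sum_le_sum fun i hi => ?_
      have hKi : K ≤ i := by
        simp only [ht, mem_filter] at hi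
        exact Fin.mk_le_of_le_val (le_of_not_gt hi.2)
      exact mul_le_mul_of_nonneg_right (hord K i hKi) (hc0 i)
    have step2 : ∑ i ∈ t, c i ≤ ∑ i ∈ s, (1 - c i) := by
      have := hsplit c
      have h2 : ∑ i ∈ s, (1 - c i) = (s.card : ℝ) - ∑ i ∈ s, c i := by
        rw [Finset.sum_sub_distrib]; simp
      rw [h2, hcard]; linarith
    have step3 : μ K * ∑ i ∈ s, (1 - c i) ≤ ∑ i ∈ s, μ i * (1 - c i) := by
      rw [Finset.mul_sum]
      refine Finset.sum_le_sum fun i hi => ?_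
      have hiK : i ≤ K := by
        simp only [hs, mem_filter] at hi
        exact le_of_lt (Fin.lt_def.mpr (by simpa [hK] using hi.2))
      have := hord i K hiK
      nlinarith [hc1 i, hc0 i]
    have hfin : ∑ i ∈ s, μ i * c i + ∑ i ∈ s, μ i * (1 - c i) = ∑ i ∈ s, μ i := by
      rw [← Finset.sum_add_distrib]; congr 1; ext i; ring
    calc ∑ i, μ i * c i = ∑ i ∈ s, μ i * c i + ∑ i ∈ t, μ i * c i := hsplit _
      _ ≤ ∑ i ∈ s, μ i * c i + μ K * ∑ i ∈ t, c i := by linarith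
      _ ≤ ∑ i ∈ s, μ i * c i + μ K * ∑ i ∈ s, (1 - c i) := by
          have := mul_le_mul_of_nonneg_left step2 ha0; linarith
      _ ≤ ∑ i ∈ s, μ i * c i + ∑ i ∈ s, μ i * (1 - c i) := by linarith
      _ = ∑ i ∈ s, μ i := hfin

set_option maxHeartbeats 2000000 in
lemma lower_bound {n m k : ℕ} (hkm : k ≤ m)
    (A : Matrix (Fin n) (Fin n) ℝ) (hA : A.rank ≤ k)
    (Z X : Matrix (Fin n) (Fin m) ℝ)
    (μ : Fin m → ℝ) (hord : ∀ i j : Fin m, i ≤ j → μ j ≤ μ i)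
    (U : Matrix (Fin m) (Fin m) ℝ) (hU : Uᵀ * U = 1) (hUU : U * Uᵀ = 1)
    (hD : Zᵀ * Z = U * Matrix.diagonal μ * Uᵀ) :
    (∑ i ∈ Finset.univ.filter (fun i : Fin m => k ≤ (i : ℕ)), μ i) ≤ fsq (Z - A * X) := by
  classical
  set C := A * X with hC
  set W := Z * U with hWdef
  have hW : Wᵀ * W = Matrix.diagonal μ := by
    rw [hWdef, Matrix.transpose_mul, Matrix.mul_assoc, ← Matrix.mul_assoc Zᵀ Z U, hD]
    calc Uᵀ * (U * Matrix.diagonal μ * Uᵀ * U) = (Uᵀ * U) * Matrix.diagonal μ * (Uᵀ * U) := by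
          simp only [Matrix.mul_assoc]
      _ = Matrix.diagonal μ := by rw [hU, Matrix.one_mul, Matrix.mul_one]
  have hμdiag : ∀ i, μ i = ∑ l, (W l i) ^ 2 := by
    intro i
    have := congrFun (congrFun hW i) i
    simp only [Matrix.diagonal_apply_eq, Matrix.mul_apply, Matrix.transpose_apply] at this
    rw [← this]; congr 1; ext l; ring
  have hμ0 : ∀ i, 0 ≤ μ i := fun i => (hμdiag i) ▸ Finset.sum_nonneg fun _ _ => sq_nonneg _
  obtain ⟨r, v, hrk, hv, hsp⟩ := exists_onb_span A hA X
  set V : Matrix (Fin n) (Fin r) ℝ := Matrix.of (fun i t => v t i) with hV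
  have horth : ∀ t s : Fin r, (inner ℝ (v t) (v s) : ℝ) = if t = s then 1 else 0 :=
    orthonormal_iff_ite.mp hv
  have hVV : Vᵀ * V = 1 := by
    ext t s
    have := horth t s
    rw [inner_euc] at this
    simp only [Matrix.mul_apply, Matrix.transpose_apply, hV, Matrix.of_apply, Matrix.one_apply]
    rw [this]
  set P : Matrix (Fin n) (Fin n) ℝ := V * Vᵀ with hP
  have hPsym : Pᵀ = P := by rw [hP, Matrix.transpose_mul, Matrix.transpose_transpose]
  have hPP : P * P = P := by
    rw [hP]
    calc V * Vᵀ * (V * Vᵀ) = V * (Vᵀ * V) * Vᵀ := by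
          rw [Matrix.mul_assoc, Matrix.mul_assoc, Matrix.mul_assoc]
      _ = V * Vᵀ := by rw [hVV, Matrix.mul_one]
  have hPV : P * V = V := by
    calc P * V = V * (Vᵀ * V) := by rw [hP, Matrix.mul_assoc]
      _ = V := by rw [hVV, Matrix.mul_one]
  have hfix : ∀ x : EuclideanSpace ℝ (Fin n), x ∈ Submodule.span ℝ (Set.range v) →
      ∀ i, ∑ l, P i l * x l = x i := by
    intro x hx
    induction hx using Submodule.span_induction with
    | mem x hx =>
        obtain ⟨s, rfl⟩ := hx
        intro i
        have : ∑ l, P i l * v s l = (P * V) i s := by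
          simp [Matrix.mul_apply, hV]
        rw [this, hPV]; rfl
    | zero => intro i; simp
    | add x y _ _ hx hy =>
        intro i
        simp only [PiLp.add_apply, mul_add, Finset.sum_add_distrib, hx i, hy i]
    | smul a x _ hx =>
        intro i
        simp only [PiLp.smul_apply, smul_eq_mul]
        rw [show ∑ l, P i l * (a * x l) = a * ∑ l, P i l * x l by
          rw [Finset.mul_sum]; congr 1; ext l; ring, hx i]
  have hPC : P * C = C := by
    ext i j
    have := hfix _ (hsp j) i
    simpa [Matrix.mul_apply, hC] using this
  -- decomposition
  have hsplitM : Z - C = (1 - P) * Z + P * (Z - C) := by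
    rw [Matrix.sub_mul, Matrix.one_mul, Matrix.mul_sub, hPC]
    abel
  have h1Psym : (1 - P)ᵀ = 1 - P := by
    rw [Matrix.transpose_sub, Matrix.transpose_one, hPsym]
  have hcross : Matrix.trace (((1 - P) * Z)ᵀ * (P * (Z - C))) = 0 := by
    rw [Matrix.transpose_mul, h1Psym]
    have : Zᵀ * (1 - P) * (P * (Z - C)) = Zᵀ * ((1 - P) * P) * (Z - C) := by
      simp only [Matrix.mul_assoc]
    rw [this]
    have : (1 - P) * P = 0 := by
      rw [Matrix.sub_mul, Matrix.one_mul, hPP, sub_self]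
    rw [this, Matrix.mul_zero, Matrix.zero_mul, Matrix.trace_zero]
  have hdecomp : fsq (Z - C) = fsq ((1 - P) * Z) + fsq (P * (Z - C)) := by
    conv_lhs => rw [hsplitM]
    exact fsq_add _ _ hcross
  have hge : fsq ((1 - P) * Z) ≤ fsq (Z - C) := by
    have := fsq_nonneg (P * (Z - C)); linarith
  -- fsq ((1-P) Z) = trace ZᵀZ - trace (Zᵀ P Z)
  have h1P2 : (1 - P) * (1 - P) = 1 - P := by
    rw [Matrix.sub_mul, Matrix.one_mul, Matrix.mul_sub, Matrix.mul_one, hPP]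
    abel
  have hval : fsq ((1 - P) * Z) =
      Matrix.trace (Zᵀ * Z) - Matrix.trace (Zᵀ * P * Z) := by
    rw [fsq_eq_trace, Matrix.transpose_mul, h1Psym]
    have : Zᵀ * (1 - P) * ((1 - P) * Z) = Zᵀ * ((1 - P) * (1 - P)) * Z := by
      simp only [Matrix.mul_assoc]
    rw [this, h1P2, Matrix.mul_sub, Matrix.mul_one, Matrix.sub_mul, Matrix.trace_sub]
  -- trace ZᵀZ = ∑ μ
  have htr1 : Matrix.trace (Zᵀ * Z) = ∑ i, μ i := by
    rw [hD, Matrix.trace_mul_comm (U * Matrix.diagonal μ) Uᵀ, ← Matrix.mul_assoc, hU,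
      Matrix.one_mul, Matrix.trace_diagonal]
  -- trace (Zᵀ P Z) = trace (Wᵀ P W)
  have htr2 : Matrix.trace (Wᵀ * P * W) = Matrix.trace (Zᵀ * P * Z) := by
    rw [hWdef, Matrix.transpose_mul]
    calc Matrix.trace (Uᵀ * Zᵀ * P * (Z * U))
        = Matrix.trace (Uᵀ * (Zᵀ * P * Z * U)) := by simp only [Matrix.mul_assoc]
      _ = Matrix.trace ((Zᵀ * P * Z * U) * Uᵀ) := Matrix.trace_mul_comm _ _
      _ = Matrix.trace (Zᵀ * P * Z) := by
          rw [Matrix.mul_assoc (Zᵀ * P * Z) U Uᵀ, hUU, Matrix.mul_one]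
  -- trace (Wᵀ P W) = fsq Q with Q = Vᵀ W
  set Q := Vᵀ * W with hQ
  have htr3 : Matrix.trace (Wᵀ * P * W) = fsq Q := by
    have hQQ : Qᵀ * Q = Wᵀ * P * W := by
      rw [hQ, Matrix.transpose_mul, Matrix.transpose_transpose, hP]
      simp only [Matrix.mul_assoc]
    rw [fsq_eq_trace, hQQ]
  set d : Fin m → ℝ := fun i => ∑ t, (Q t i) ^ 2 with hd
  have hfsqQ : fsq Q = ∑ i, d i := by
    rw [fsq, hd]; exact Finset.sum_comm
  -- Bessel : d i ≤ μ i
  set wE : Fin m → EuclideanSpace ℝ (Fin n) := fun i => euc (fun l => W l i) with hwE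
  have hQinner : ∀ t i, Q t i = (inner ℝ (v t) (wE i) : ℝ) := by
    intro t i
    rw [inner_euc]
    simp [hQ, Matrix.mul_apply, hV, hwE]
  have hdle : ∀ i, d i ≤ μ i := by
    intro i
    have hb := hv.sum_inner_products_le (wE i) (s := Finset.univ)
    have hnorm : ‖wE i‖ ^ 2 = μ i := by
      rw [norm_sq_euc, hμdiag i]; rfl
    calc d i = ∑ t, ‖(inner ℝ (v t) (wE i) : ℝ)‖ ^ 2 := by
          rw [hd]
          refine Finset.sum_congr rfl fun t _ => ?_
          rw [hQinner t i, Real.norm_eq_abs, sq_abs]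
      _ ≤ ‖wE i‖ ^ 2 := hb
      _ = μ i := hnorm
  have hd0 : ∀ i, 0 ≤ d i := fun i => Finset.sum_nonneg fun _ _ => sq_nonneg _
  -- c
  set c : Fin m → ℝ := fun i => if μ i = 0 then 0 else d i / μ i with hc
  have hμc : ∀ i, μ i * c i = d i := by
    intro i
    by_cases h : μ i = 0
    · have h1 := hdle i
      rw [h] at h1
      have h2 : d i = 0 := le_antisymm h1 (hd0 i)
      simp [hc, h, h2]
    · simp only [hc, h, if_false]; field_simp
  have hc0 : ∀ i, 0 ≤ c i := by
    intro i
    by_cases h : μ i = 0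
    · simp [hc, h]
    · simp only [hc, h, if_false]
      exact div_nonneg (hd0 i) (hμ0 i)
  have hc1 : ∀ i, c i ≤ 1 := by
    intro i
    by_cases h : μ i = 0
    · simp [hc, h]
    · simp only [hc, h, if_false]
      rw [div_le_one (lt_of_le_of_ne (hμ0 i) (Ne.symm h))]
      exact hdle i
  -- sum c ≤ r
  have hworth : Orthonormal ℝ (fun i : {i : Fin m // μ i ≠ 0} =>
      (Real.sqrt (μ i))⁻¹ • wE i) := by
    rw [orthonormal_iff_ite]
    intro i j
    rw [real_inner_smul_left, real_inner_smul_right, inner_euc]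
    have hWW : ∀ a b : Fin m, ∑ l, W l a * W l b = Matrix.diagonal μ a b := by
      intro a b
      have := congrFun (congrFun hW a) b
      simp only [Matrix.mul_apply, Matrix.transpose_apply] at this
      exact this
    have : ∑ l, (wE i.1) l * (wE j.1) l = Matrix.diagonal μ i.1 j.1 := hWW i.1 j.1
    rw [this]
    by_cases h : i = j
    · subst h
      simp only [if_pos rfl, Matrix.diagonal_apply_eq]
      have hpos : 0 < μ i.1 := lt_of_le_of_ne (hμ0 i.1) (Ne.symm i.2)
      rw [← Real.sqrt_mul_self (le_of_lt hpos)]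
      field_simp
      rw [Real.sq_sqrt (Real.sqrt_nonneg _), if_pos trivial, mul_one]
    · have hne : i.1 ≠ j.1 := fun hh => h (Subtype.ext hh)
      rw [if_neg h, Matrix.diagonal_apply_ne _ hne]
      ring
  have hsumc : ∑ i, c i ≤ (r : ℝ) := by
    have hfilter : ∑ i, c i = ∑ i ∈ Finset.univ.filter (fun i => μ i ≠ 0), c i := by
      symm
      apply Finset.sum_filter_of_ne
      intro i _ hci
      intro h
      exact hci (by simp [hc, h])
    have hsub : ∑ i ∈ Finset.univ.filter (fun i => μ i ≠ 0), c i
        = ∑ i : {i : Fin m // μ i ≠ 0}, c i.1 := by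
      rw [← Finset.sum_subtype (Finset.univ.filter (fun i => μ i ≠ 0)) (by simp) c]
    have hcval : ∀ i : {i : Fin m // μ i ≠ 0},
        c i.1 = ∑ t, ‖(inner ℝ ((Real.sqrt (μ i.1))⁻¹ • wE i.1) (v t) : ℝ)‖ ^ 2 := by
      intro i
      have hpos : 0 < μ i.1 := lt_of_le_of_ne (hμ0 i.1) (Ne.symm i.2)
      simp only [hc, i.2, if_false, hd]
      rw [Finset.sum_div]
      congr 1; ext t
      rw [real_inner_smul_left, real_inner_comm, ← hQinner t i.1, Real.norm_eq_abs, sq_abs]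
      rw [mul_pow, ← Real.sqrt_inv, Real.sq_sqrt (by positivity)]
      field_simp
    calc ∑ i, c i = ∑ i : {i : Fin m // μ i ≠ 0}, c i.1 := by rw [hfilter, hsub]
      _ = ∑ i : {i : Fin m // μ i ≠ 0},
            ∑ t, ‖(inner ℝ ((Real.sqrt (μ i.1))⁻¹ • wE i.1) (v t) : ℝ)‖ ^ 2 := by
          exact Finset.sum_congr rfl fun i _ => hcval i
      _ = ∑ t, ∑ i : {i : Fin m // μ i ≠ 0},
            ‖(inner ℝ ((Real.sqrt (μ i.1))⁻¹ • wE i.1) (v t) : ℝ)‖ ^ 2 := Finset.sum_comm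
      _ ≤ ∑ t : Fin r, (1 : ℝ) := by
          refine Finset.sum_le_sum fun t _ => ?_
          have := hworth.sum_inner_products_le (v t) (s := Finset.univ)
          calc _ ≤ ‖v t‖ ^ 2 := this
            _ = 1 := by rw [hv.1 t]; norm_num
      _ = (r : ℝ) := by simp
  have hsumck : ∑ i, c i ≤ (k : ℝ) := le_trans hsumc (by exact_mod_cast hrk)
  -- combine
  have hcomb := comb hkm μ c hμ0 hord hc0 hc1 hsumck
  have htrace_le : Matrix.trace (Zᵀ * P * Z) ≤
      ∑ i ∈ Finset.univ.filter (fun i : Fin m => (i : ℕ) < k), μ i := by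
    rw [← htr2, htr3, hfsqQ]
    calc ∑ i, d i = ∑ i, μ i * c i := by
          exact Finset.sum_congr rfl fun i _ => (hμc i).symm
      _ ≤ _ := hcomb
  have hsumsplit : ∑ i, μ i =
      (∑ i ∈ Finset.univ.filter (fun i : Fin m => (i : ℕ) < k), μ i) +
      (∑ i ∈ Finset.univ.filter (fun i : Fin m => k ≤ (i : ℕ)), μ i) := by
    rw [← Finset.sum_filter_add_sum_filter_not Finset.univ (fun i : Fin m => (i : ℕ) < k)]
    congr 1
    apply Finset.sum_congr _ (fun _ _ => rfl)
    ext i; simp [not_lt]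
  calc (∑ i ∈ Finset.univ.filter (fun i : Fin m => k ≤ (i : ℕ)), μ i)
      = ∑ i, μ i - (∑ i ∈ Finset.univ.filter (fun i : Fin m => (i : ℕ) < k), μ i) := by
        rw [hsumsplit]; ring
    _ ≤ Matrix.trace (Zᵀ * Z) - Matrix.trace (Zᵀ * P * Z) := by
        rw [htr1]; linarith
    _ = fsq ((1 - P) * Z) := hval.symm
    _ ≤ fsq (Z - C) := hge

lemma fsq_eq_zero {p q : ℕ} {M : Matrix (Fin p) (Fin q) ℝ} (h : fsq M = 0) : M = 0 := by
  ext i j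
  have h1 : ∀ i ∈ Finset.univ, (0:ℝ) ≤ ∑ j, (M i j) ^ 2 :=
    fun _ _ => Finset.sum_nonneg fun _ _ => sq_nonneg _
  have h2 := (Finset.sum_eq_zero_iff_of_nonneg h1).mp h i (Finset.mem_univ i)
  have h3 := (Finset.sum_eq_zero_iff_of_nonneg (fun _ _ => sq_nonneg _)).mp h2 j
    (Finset.mem_univ j)
  have := pow_eq_zero_iff (n := 2) (by norm_num) |>.mp h3
  simpa using this

lemma frobNorm_sq {p q : ℕ} (A : Matrix (Fin p) (Fin q) ℝ) : frobNorm A ^ 2 = fsq A :=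
  Real.sq_sqrt (fsq_nonneg A)

set_option maxHeartbeats 2000000 in
/-- Error characterisation of Theorem 4.1: if `μ 0 ≥ μ 1 ≥ …` are the eigenvalues of `ZᵀZ`
(realised through an orthogonal diagonalisation), then the optimal approximation error is
`∑_{i ≥ k} μ i + ‖Y (I - Π)‖_F²`, where `Π = G X` and `Z = Y Π`. -/
theorem stmt_2 (n m k : ℕ) (hk : 0 < k) (hkm : k ≤ m) (hmn : m ≤ n)
    (X Y : Matrix (Fin n) (Fin m) ℝ) (G : Matrix (Fin m) (Fin n) ℝ)
    (hG1 : X * G * X = X) (hG2 : G * X * G = G)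
    (hG3 : (X * G)ᵀ = X * G) (hG4 : (G * X)ᵀ = G * X)
    (μ : Fin m → ℝ) (hord : ∀ i j : Fin m, i ≤ j → μ j ≤ μ i)
    (U : Matrix (Fin m) (Fin m) ℝ) (hU : Uᵀ * U = 1)
    (heig : (Y * (G * X))ᵀ * (Y * (G * X)) = U * Matrix.diagonal μ * Uᵀ) :
    sInf {e : ℝ | ∃ A : Matrix (Fin n) (Fin n) ℝ, A.rank ≤ k ∧
        e = frobNorm (Y - A * X) ^ 2} =
      (∑ i ∈ Finset.univ.filter (fun i : Fin m => k ≤ (i : ℕ)), μ i) +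
      frobNorm (Y * (1 - G * X)) ^ 2 := by
  classical
  set Z := Y * (G * X) with hZdef
  have hUU : U * Uᵀ = 1 := mul_eq_one_comm.mp hU
  -- projection facts
  have hPiPi : (G * X) * (G * X) = G * X := by
    calc (G * X) * (G * X) = (G * X * G) * X := by simp only [Matrix.mul_assoc]
      _ = G * X := by rw [hG2]
  have hXPi : X * (G * X) = X := by rw [← Matrix.mul_assoc, hG1]
  have hZPi : Z * (G * X) = Z := by
    rw [hZdef, Matrix.mul_assoc, hPiPi]
  have hPiZT : (G * X) * Zᵀ = Zᵀ := by
    rw [hZdef, Matrix.transpose_mul, hG4, ← Matrix.mul_assoc, hPiPi]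
  -- decomposition
  have hdecomp : ∀ A : Matrix (Fin n) (Fin n) ℝ,
      fsq (Y - A * X) = fsq (Z - A * X) + fsq (Y * (1 - G * X)) := by
    intro A
    have hsum : Y - A * X = (Z - A * X) + Y * (1 - G * X) := by
      rw [Matrix.mul_sub, Matrix.mul_one]
      abel
    have hMPi : (Z - A * X) * (G * X) = Z - A * X := by
      rw [Matrix.sub_mul, hZPi, Matrix.mul_assoc, hXPi]
    have hcross : Matrix.trace ((Z - A * X)ᵀ * (Y * (1 - G * X))) = 0 := by
      have hMT : (Z - A * X)ᵀ = (G * X) * (Z - A * X)ᵀ := by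
        conv_lhs => rw [← hMPi]
        rw [Matrix.transpose_mul, hG4]
      rw [hMT, Matrix.mul_assoc, Matrix.trace_mul_comm]
      have : Y * (1 - G * X) * (G * X) = 0 := by
        rw [Matrix.mul_assoc, Matrix.sub_mul, Matrix.one_mul, hPiPi, sub_self, Matrix.mul_zero]
      rw [Matrix.mul_assoc, this, Matrix.mul_zero, Matrix.trace_zero]
    rw [hsum, fsq_add _ _ hcross]
  -- the optimal A
  set ind : Fin m → ℝ := fun i => if (i : ℕ) < k then 1 else 0 with hind
  set D0 : Matrix (Fin m) (Fin m) ℝ := Matrix.diagonal ind with hD0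
  set B : Matrix (Fin n) (Fin m) ℝ := Z * U * D0 * Uᵀ with hB
  set A0 : Matrix (Fin n) (Fin n) ℝ := Z * U * D0 * Uᵀ * G with hA0
  have hrank : A0.rank ≤ k := by
    have h1 : A0.rank ≤ (Z * U * D0).rank :=
      le_trans (Matrix.rank_mul_le_left _ G) (Matrix.rank_mul_le_left _ Uᵀ)
    have h2 : (Z * U * D0).rank ≤ D0.rank := Matrix.rank_mul_le_right _ _
    have h3 : D0.rank = k := by
      rw [hD0, Matrix.rank_diagonal]
      have : ∀ i : Fin m, ind i ≠ 0 ↔ (i : ℕ) < k := by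
        intro i
        by_cases h : (i : ℕ) < k <;> simp [hind, h]
      calc Fintype.card {i // ind i ≠ 0} = Fintype.card {i : Fin m // (i : ℕ) < k} := by
            apply Fintype.card_congr
            exact Equiv.subtypeEquivRight this
        _ = (Finset.univ.filter fun i : Fin m => (i : ℕ) < k).card := by
            rw [Fintype.card_subtype]
        _ = k := card_filter_lt hkm
    omega
  have hZZU : Uᵀ * (Zᵀ * Z) * U = Matrix.diagonal μ := by
    rw [heig]
    calc Uᵀ * (U * Matrix.diagonal μ * Uᵀ) * U
        = (Uᵀ * U) * Matrix.diagonal μ * (Uᵀ * U) := by simp only [Matrix.mul_assoc]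
      _ = Matrix.diagonal μ := by rw [hU, Matrix.one_mul, Matrix.mul_one]
  have hPiZZ : (1 - G * X) * (Zᵀ * Z) = 0 := by
    rw [Matrix.sub_mul, Matrix.one_mul, ← Matrix.mul_assoc (G * X) Zᵀ Z, hPiZT, sub_self]
  have hUdiag : U * Matrix.diagonal μ = Zᵀ * Z * U := by
    rw [heig, Matrix.mul_assoc (U * Matrix.diagonal μ) Uᵀ U, hU, Matrix.mul_one]
  -- B (G X) = B
  have hBPi : B * (G * X) = B := by
    have hM : B * (1 - G * X) = 0 := by
      apply fsq_eq_zero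
      rw [fsq_eq_trace]
      have hT : (1 - G * X)ᵀ = 1 - G * X := by
        rw [Matrix.transpose_sub, Matrix.transpose_one, hG4]
      have hBTB : Bᵀ * B = U * (Matrix.diagonal μ * D0) * Uᵀ := by
        rw [hB]
        have e1 : (Z * U * D0 * Uᵀ)ᵀ = U * D0 * Uᵀ * Zᵀ := by
          simp only [Matrix.transpose_mul, Matrix.transpose_transpose]
          rw [hD0, Matrix.diagonal_transpose]
          simp only [Matrix.mul_assoc]
        rw [e1]
        calc U * D0 * Uᵀ * Zᵀ * (Z * U * D0 * Uᵀ)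
            = U * D0 * (Uᵀ * (Zᵀ * Z) * U) * D0 * Uᵀ := by simp only [Matrix.mul_assoc]
          _ = U * D0 * Matrix.diagonal μ * D0 * Uᵀ := by rw [hZZU]
          _ = U * (Matrix.diagonal μ * D0) * Uᵀ := by
              rw [hD0]
              have hdd : Matrix.diagonal ind * Matrix.diagonal μ * Matrix.diagonal ind
                  = Matrix.diagonal μ * Matrix.diagonal ind := by
                rw [Matrix.diagonal_mul_diagonal, Matrix.diagonal_mul_diagonal,
                  Matrix.diagonal_mul_diagonal]
                refine congrArg Matrix.diagonal ?_
                funext i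
                by_cases h : (i : ℕ) < k <;> simp [hind, h]
              calc U * Matrix.diagonal ind * Matrix.diagonal μ * Matrix.diagonal ind * Uᵀ
                  = U * (Matrix.diagonal ind * Matrix.diagonal μ * Matrix.diagonal ind) * Uᵀ := by
                    simp only [Matrix.mul_assoc]
                _ = U * (Matrix.diagonal μ * Matrix.diagonal ind) * Uᵀ := by rw [hdd]
      have hMM : (B * (1 - G * X))ᵀ * (B * (1 - G * X)) = 0 := by
        rw [Matrix.transpose_mul, hT]
        calc (1 - G * X) * Bᵀ * (B * (1 - G * X))
            = ((1 - G * X) * (Bᵀ * B)) * (1 - G * X) := by simp only [Matrix.mul_assoc]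
          _ = 0 := by
              rw [hBTB]
              have h0 : (1 - G * X) * (U * (Matrix.diagonal μ * D0) * Uᵀ) = 0 := by
                calc (1 - G * X) * (U * (Matrix.diagonal μ * D0) * Uᵀ)
                    = ((1 - G * X) * (U * Matrix.diagonal μ)) * D0 * Uᵀ := by
                      simp only [Matrix.mul_assoc]
                  _ = ((1 - G * X) * (Zᵀ * Z)) * U * D0 * Uᵀ := by
                      rw [hUdiag]; simp only [Matrix.mul_assoc]
                  _ = 0 := by rw [hPiZZ]; simp only [Matrix.zero_mul]
              rw [h0, Matrix.zero_mul]
      rw [hMM, Matrix.trace_zero]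
    have hM' : B * (1 : Matrix (Fin m) (Fin m) ℝ) - B * (G * X) = 0 := by rw [← Matrix.mul_sub]; exact hM
    rw [Matrix.mul_one] at hM'
    exact (sub_eq_zero.mp hM').symm
  have hA0X : A0 * X = B := by
    rw [hA0, Matrix.mul_assoc (Z * U * D0 * Uᵀ) G X, ← hB, hBPi]
  -- fsq (Z - B) = tail sum
  have htail : fsq (Z - B) = ∑ i ∈ Finset.univ.filter (fun i : Fin m => k ≤ (i : ℕ)), μ i := by
    have hZUU : Z * U * Uᵀ = Z := by rw [Matrix.mul_assoc, hUU, Matrix.mul_one]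
    have hZB : Z - B = Z * U * (1 - D0) * Uᵀ := by
      rw [Matrix.mul_sub, Matrix.sub_mul, Matrix.mul_one, hZUU, hB]
    rw [hZB, fsq_eq_trace]
    have hT : (1 - D0)ᵀ = 1 - D0 := by
      rw [Matrix.transpose_sub, Matrix.transpose_one, hD0, Matrix.diagonal_transpose]
    have e1 : (Z * U * (1 - D0) * Uᵀ)ᵀ = U * (1 - D0) * Uᵀ * Zᵀ := by
      simp only [Matrix.transpose_mul, Matrix.transpose_transpose, hT]
      simp only [Matrix.mul_assoc]
    rw [e1]
    have e2 : U * (1 - D0) * Uᵀ * Zᵀ * (Z * U * (1 - D0) * Uᵀ)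
        = U * ((1 - D0) * Matrix.diagonal μ * (1 - D0)) * Uᵀ := by
      calc U * (1 - D0) * Uᵀ * Zᵀ * (Z * U * (1 - D0) * Uᵀ)
          = U * (1 - D0) * (Uᵀ * (Zᵀ * Z) * U) * (1 - D0) * Uᵀ := by
            simp only [Matrix.mul_assoc]
        _ = U * (1 - D0) * Matrix.diagonal μ * (1 - D0) * Uᵀ := by rw [hZZU]
        _ = _ := by simp only [Matrix.mul_assoc]
    rw [e2, Matrix.trace_mul_comm, ← Matrix.mul_assoc, hU, Matrix.one_mul]
    have h1D : (1 : Matrix (Fin m) (Fin m) ℝ) - D0 = Matrix.diagonal (fun i => 1 - ind i) := by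
      rw [hD0, ← Matrix.diagonal_one, Matrix.diagonal_sub]
    rw [h1D, Matrix.diagonal_mul_diagonal, Matrix.diagonal_mul_diagonal, Matrix.trace_diagonal]
    rw [Finset.sum_filter]
    apply Finset.sum_congr rfl
    intro i _
    by_cases h : (i : ℕ) < k
    · simp [hind, h, Nat.not_le.mpr h]
    · simp [hind, h, Nat.le_of_not_lt h]
  -- assemble
  set val := (∑ i ∈ Finset.univ.filter (fun i : Fin m => k ≤ (i : ℕ)), μ i) +
      frobNorm (Y * (1 - G * X)) ^ 2 with hval
  have hvmem : val ∈ {e : ℝ | ∃ A : Matrix (Fin n) (Fin n) ℝ, A.rank ≤ k ∧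
      e = frobNorm (Y - A * X) ^ 2} := by
    refine ⟨A0, hrank, ?_⟩
    rw [hval, frobNorm_sq, frobNorm_sq, hdecomp A0, hA0X, htail]
  have hlb : ∀ e ∈ {e : ℝ | ∃ A : Matrix (Fin n) (Fin n) ℝ, A.rank ≤ k ∧
      e = frobNorm (Y - A * X) ^ 2}, val ≤ e := by
    rintro e ⟨A, hA, rfl⟩
    rw [hval, frobNorm_sq, frobNorm_sq, hdecomp A]
    have := lower_bound hkm A hA Z X μ hord U hU hUU heig
    linarith
  exact le_antisymm (csInf_le ⟨val, hlb⟩ hvmem) (le_csInf ⟨val, hvmem⟩ hlb)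
end

section
/- The objective function A ↦ ‖Y − A·X‖_F² is coercive on the subspace V = {A ∈ ℝ^{n×n} : every row of A lies in the column space of X}: for every constant C > 0 there exists R > 0 such that every A ∈ V with ‖A‖_F > R satisfies ‖Y − A·X‖_F² > C. -/
open Matrix

attribute [local instance] Matrix.frobeniusSeminormedAddCommGroup
  Matrix.frobeniusNormedAddCommGroup Matrix.frobeniusNormedSpace

lemma frobNorm_eq_norm {p q : ℕ} (A : Matrix (Fin p) (Fin q) ℝ) : frobNorm A = ‖A‖ := by
  rw [Matrix.frobenius_norm_def, frobNorm, Real.sqrt_eq_rpow]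
  congr 1
  refine Finset.sum_congr rfl fun i _ => Finset.sum_congr rfl fun j _ => ?_
  rw [Real.rpow_two, Real.norm_eq_abs, sq_abs]

/-- If every row of `A` lies in the column space of `X` and `A * X = 0` then `A = 0`. -/
lemma key_inj {n m : ℕ} (X : Matrix (Fin n) (Fin m) ℝ) (A : Matrix (Fin n) (Fin n) ℝ)
    (hA : LinearMap.range (Matrix.mulVecLin Aᵀ) ≤ LinearMap.range (Matrix.mulVecLin X))
    (h0 : A * X = 0) : A = 0 := by
  -- each row of A is X.mulVec of some vector
  have hrow : ∀ i : Fin n, ∃ v : Fin m → ℝ, X.mulVec v = fun k => A i k := by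
    intro i
    obtain ⟨v, hv⟩ := hA ⟨Pi.single i 1, rfl⟩
    refine ⟨v, ?_⟩
    have hv' : X *ᵥ v = Aᵀ *ᵥ Pi.single i 1 := by
      simpa only [Matrix.mulVecLin_apply] using hv
    rw [hv']
    funext k
    simp [Matrix.mulVec, dotProduct, Pi.single_apply]
  choose v hv using hrow
  set M : Matrix (Fin n) (Fin m) ℝ := Matrix.of fun i j => v i j with hM
  have hAM : A = M * Xᵀ := by
    ext i k
    have := congrFun (hv i) k
    simp only [Matrix.mulVec, dotProduct] at this
    simp only [Matrix.mul_apply, hM, Matrix.of_apply, Matrix.transpose_apply]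
    rw [← this]
    exact Finset.sum_congr rfl fun j _ => mul_comm _ _
  have hMX : M * Xᵀ * (M * Xᵀ)ᴴ = 0 := by
    rw [Matrix.conjTranspose_eq_transpose_of_trivial, Matrix.transpose_mul,
      Matrix.transpose_transpose, ← Matrix.mul_assoc, ← hAM, h0, Matrix.zero_mul]
  rw [hAM, Matrix.self_mul_conjTranspose_eq_zero.mp hMX]

/-- Coercivity of `A ↦ ‖Y - A X‖_F²` on the subspace of matrices whose rows lie in the
column space of `X`. -/
theorem stmt_8 (n m : ℕ) (hn : 0 < n) (hm : 0 < m) (hmn : m ≤ n)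
    (X Y : Matrix (Fin n) (Fin m) ℝ) :
    ∀ C : ℝ, 0 < C → ∃ R : ℝ, 0 < R ∧
      ∀ A : Matrix (Fin n) (Fin n) ℝ,
        LinearMap.range (Matrix.mulVecLin Aᵀ) ≤ LinearMap.range (Matrix.mulVecLin X) →
        R < frobNorm A → C < frobNorm (Y - A * X) ^ 2 := by
  intro C hC
  -- the subspace V
  set V : Submodule ℝ (Matrix (Fin n) (Fin n) ℝ) :=
    { carrier := {A | LinearMap.range (Matrix.mulVecLin Aᵀ) ≤
        LinearMap.range (Matrix.mulVecLin X)}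
      add_mem' := by
        intro a b ha hb x hx
        obtain ⟨w, rfl⟩ := hx
        have : (a + b)ᵀ.mulVecLin w = aᵀ.mulVecLin w + bᵀ.mulVecLin w := by
          simp only [Matrix.mulVecLin_apply, Matrix.transpose_add, Matrix.add_mulVec]
        rw [this]
        exact add_mem (ha ⟨w, rfl⟩) (hb ⟨w, rfl⟩)
      zero_mem' := by
        intro x hx
        obtain ⟨w, rfl⟩ := hx
        have : (0 : Matrix (Fin n) (Fin n) ℝ)ᵀ.mulVecLin w = 0 := by
          simp
        rw [this]
        exact zero_mem _
      smul_mem' := by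
        intro c a ha x hx
        obtain ⟨w, rfl⟩ := hx
        have : (c • a)ᵀ.mulVecLin w = c • aᵀ.mulVecLin w := by
          simp only [Matrix.mulVecLin_apply, Matrix.transpose_smul, Matrix.smul_mulVec]
        rw [this]
        exact Submodule.smul_mem _ _ (ha ⟨w, rfl⟩) } with hV
  -- the linear map A ↦ A * X on V
  set f : V →ₗ[ℝ] Matrix (Fin n) (Fin m) ℝ :=
    { toFun := fun A => A.1 * X
      map_add' := by intro a b; simp [Matrix.add_mul]
      map_smul' := by intro c a; simp [Matrix.smul_mul] }
  have hinj : Function.Injective f := by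
    rw [← LinearMap.ker_eq_bot]
    rw [LinearMap.ker_eq_bot']
    intro a ha
    have := key_inj X a.1 a.2 ha
    exact Subtype.ext this
  -- antilipschitz constant
  let e : V ≃ₗ[ℝ] LinearMap.range f := LinearEquiv.ofInjective f hinj
  let ce := e.toContinuousLinearEquiv
  obtain ⟨K, hK⟩ : ∃ K : NNReal, AntilipschitzWith K ce := ⟨_, ce.antilipschitz⟩
  have hbound : ∀ x : V, ‖x‖ ≤ ((K : ℝ) + 1) * ‖f x‖ := by
    intro x
    have h1 : dist x 0 ≤ (K : ℝ) * dist (ce x) (ce 0) := hK.le_mul_dist x 0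
    rw [dist_zero_right, map_zero, dist_zero_right] at h1
    have h2 : ‖ce x‖ = ‖f x‖ := rfl
    rw [h2] at h1
    calc ‖x‖ ≤ (K : ℝ) * ‖f x‖ := h1
      _ ≤ ((K : ℝ) + 1) * ‖f x‖ := by
          apply mul_le_mul_of_nonneg_right _ (norm_nonneg _)
          linarith
  set c : ℝ := (K : ℝ) + 1 with hc
  have hcpos : 0 < c := by positivity
  refine ⟨c * (Real.sqrt C + ‖Y‖ + 1), by rw [hc]; positivity, ?_⟩
  intro A hA hR
  set x : V := ⟨A, hA⟩
  have hxA : ‖x‖ = ‖A‖ := rfl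
  have hfx : f x = A * X := rfl
  have h1 : ‖A‖ ≤ c * ‖A * X‖ := by
    have := hbound x
    rwa [hxA, hfx] at this
  rw [frobNorm_eq_norm] at hR
  have h2 : Real.sqrt C + ‖Y‖ + 1 < ‖A * X‖ := by
    by_contra hcon
    push_neg at hcon
    have : c * ‖A * X‖ ≤ c * (Real.sqrt C + ‖Y‖ + 1) :=
      mul_le_mul_of_nonneg_left hcon hcpos.le
    linarith
  have h3 : Real.sqrt C < ‖Y - A * X‖ := by
    have : ‖A * X‖ - ‖Y‖ ≤ ‖Y - A * X‖ := by
      rw [norm_sub_rev]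
      exact norm_sub_norm_le _ _
    linarith
  rw [frobNorm_eq_norm]
  calc C = Real.sqrt C ^ 2 := (Real.sq_sqrt hC.le).symm
    _ < ‖Y - A * X‖ ^ 2 := by
        apply pow_lt_pow_left₀ h3 (Real.sqrt_nonneg C)
        norm_num
end
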